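/- Let A be a Hopf algebra over a field k. The vector space A ⊗_k A with the left A-action a·(x ⊗ y) = Σ a₁x ⊗ yS(a₂) (that is, L(A^e), the left adjoint action on the enveloping algebra regarded as an A-bimodule) is a free left A-module. -/

import Mathlib

/-!
STATEMENT 11: Let `A` be a Hopf algebra over `k`.  The vector space `A ⊗ A` with the
left adjoint action `a·(x ⊗ y) = Σ a₁x ⊗ y S(a₂)` (that is, `L(A^e)`) is a free left
`A`-module.
-/

open TensorProduct

noncomputable section

variable (k A : Type) [Field k] [Ring A] [HopfAlgebra k A]

/-- The left adjoint action of `A` on `A ⊗ A` (i.e. on `A^e` regarded as an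
`A`-bimodule):  `a · (x ⊗ y) = Σ a₁x ⊗ y S(a₂)`. -/
def adAct : A →ₗ[k] ((A ⊗[k] A) →ₗ[k] (A ⊗[k] A)) :=
  (TensorProduct.homTensorHomMap (RingHom.id k) A A A A) ∘ₗ
    (TensorProduct.map (LinearMap.mul k A)
      ((LinearMap.mul k A).flip ∘ₗ HopfAlgebra.antipode k)) ∘ₗ Coalgebra.comul

open Coalgebra HopfAlgebra LinearMap

/-- A representation of `comul (a*b)` built from representations of `comul a`, `comul b`. -/
def mulRepr {ι κ : Type*} {a b : A} (ra : Coalgebra.Repr k a ι) (rb : Coalgebra.Repr k b κ) :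
    Coalgebra.Repr k (a * b) (ι × κ) where
  index := ra.index ×ˢ rb.index
  left := fun p => ra.left p.1 * rb.left p.2
  right := fun p => ra.right p.1 * rb.right p.2
  eq := by
    rw [Bialgebra.comul_mul, ← ra.eq, ← rb.eq, Finset.sum_mul_sum, Finset.sum_product]
    simp [Algebra.TensorProduct.tmul_mul_tmul]

/-- A representation of `comul (a ⊗ₜ b)` in the tensor-product coalgebra. -/
def tmulRepr {ι κ : Type*} {a b : A} (ra : Coalgebra.Repr k a ι) (rb : Coalgebra.Repr k b κ) :
    Coalgebra.Repr k (a ⊗ₜ[k] b : A ⊗[k] A) (ι × κ) where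
  index := ra.index ×ˢ rb.index
  left := fun p => ra.left p.1 ⊗ₜ[k] rb.left p.2
  right := fun p => ra.right p.1 ⊗ₜ[k] rb.right p.2
  eq := by
    show _ = CoalgebraStruct.comul (a ⊗ₜ[k] b)
    rw [TensorProduct.comul_tmul]
    rw [← ra.eq, ← rb.eq, TensorProduct.sum_tmul, map_sum, Finset.sum_product]
    simp [TensorProduct.tmul_sum, TensorProduct.tensorTensorTensorComm_tmul, TensorProduct.AlgebraTensorModule.tensorTensorTensorComm_tmul, map_sum]

section Conv

variable {C : Type} [AddCommGroup C] [Module k C] [Coalgebra k C]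

/-- Convolution product on `Hom(C, A)`. -/
def conv (f g : C →ₗ[k] A) : C →ₗ[k] A :=
  LinearMap.mul' k A ∘ₗ TensorProduct.map f g ∘ₗ Coalgebra.comul

/-- The convolution unit. -/
def convUnit : C →ₗ[k] A := Algebra.linearMap k A ∘ₗ Coalgebra.counit

lemma conv_repr (f g : C →ₗ[k] A) {ι : Type*} {z : C} (r : Coalgebra.Repr k z ι) :
    conv k A f g z = ∑ i ∈ r.index, f (r.left i) * g (r.right i) := by
  simp only [conv, LinearMap.comp_apply, ← r.eq, map_sum, TensorProduct.map_tmul,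
    LinearMap.mul'_apply]

lemma sum_counit_smul {ι : Type*} {z : C} (r : Coalgebra.Repr k z ι) :
    ∑ i ∈ r.index, Coalgebra.counit (R := k) (r.left i) • r.right i = z := by
  have h := congrArg (TensorProduct.lid k C) (Coalgebra.sum_counit_tmul_eq r)
  rw [map_sum] at h
  simpa [-Coalgebra.sum_counit_tmul_eq] using h

lemma sum_smul_counit {ι : Type*} {z : C} (r : Coalgebra.Repr k z ι) :
    ∑ i ∈ r.index, Coalgebra.counit (R := k) (r.right i) • r.left i = z := by
  have h := congrArg (TensorProduct.rid k C) (Coalgebra.sum_tmul_counit_eq r)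
  rw [map_sum] at h
  simpa [-Coalgebra.sum_tmul_counit_eq] using h

lemma convUnit_conv (f : C →ₗ[k] A) : conv k A (convUnit k A) f = f := by
  ext z
  rw [conv_repr k A _ _ (ℛ k z)]
  have h := congrArg f (sum_counit_smul k (ℛ k z))
  rw [map_sum] at h
  simp only [map_smul] at h
  rw [← h]
  exact Finset.sum_congr rfl fun i _ => by simp [convUnit, Algebra.smul_def]

lemma conv_convUnit (f : C →ₗ[k] A) : conv k A f (convUnit k A) = f := by
  ext z
  rw [conv_repr k A _ _ (ℛ k z)]
  have h := congrArg f (sum_smul_counit k (ℛ k z))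
  rw [map_sum] at h
  simp only [map_smul] at h
  rw [← h]
  exact Finset.sum_congr rfl fun i _ => by
    simp [convUnit, Algebra.smul_def, Algebra.commutes]

lemma conv_assoc (f g h : C →ₗ[k] A) :
    conv k A (conv k A f g) h = conv k A f (conv k A g h) := by
  ext z
  have key := congrArg (LinearMap.mul' k A ∘ₗ (LinearMap.mul' k A).lTensor A ∘ₗ
      TensorProduct.map f (TensorProduct.map g h))
    (Coalgebra.sum_tmul_tmul_eq (ℛ k z) (fun i => ℛ k ((ℛ k z).left i))
      (fun i => ℛ k ((ℛ k z).right i)))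
  simp only [map_sum, LinearMap.comp_apply, TensorProduct.map_tmul, LinearMap.lTensor_tmul,
    LinearMap.mul'_apply] at key
  rw [conv_repr k A _ h (ℛ k z), conv_repr k A f _ (ℛ k z)]
  refine Eq.trans (Finset.sum_congr rfl fun i _ => ?_)
    (key.trans (Finset.sum_congr rfl fun i _ => ?_))
  · rw [conv_repr k A f g (ℛ k ((ℛ k z).left i)), Finset.sum_mul]
    exact Finset.sum_congr rfl fun j _ => mul_assoc _ _ _
  · rw [conv_repr k A g h (ℛ k ((ℛ k z).right i)), Finset.mul_sum]

end Conv

lemma antipode_one' : HopfAlgebra.antipode (R := k) (1 : A) = 1 := by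
  have h := HopfAlgebra.mul_antipode_rTensor_comul_apply (R := k) (1 : A)
  simpa [Algebra.TensorProduct.one_def] using h

lemma antipode_mul' (a b : A) :
    HopfAlgebra.antipode (R := k) (a * b)
      = HopfAlgebra.antipode (R := k) b * HopfAlgebra.antipode (R := k) a := by
  set S : A →ₗ[k] A := HopfAlgebra.antipode (R := k) with hS
  set F : A ⊗[k] A →ₗ[k] A := S ∘ₗ LinearMap.mul' k A with hF
  set M : A ⊗[k] A →ₗ[k] A := LinearMap.mul' k A with hM
  set G : A ⊗[k] A →ₗ[k] A :=
    LinearMap.mul' k A ∘ₗ TensorProduct.map S S ∘ₗ (TensorProduct.comm k A A).toLinearMap with hG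
  have h1 : conv k A F M = convUnit k A := by
    apply TensorProduct.ext'
    intro a b
    rw [conv_repr k A F M (tmulRepr k A (ℛ k a) (ℛ k b))]
    have key := HopfAlgebra.sum_antipode_mul_eq_algebraMap_counit (R := k) (mulRepr k A (ℛ k a) (ℛ k b))
    simp only [mulRepr] at key
    simp only [tmulRepr, hF, hM, LinearMap.comp_apply, LinearMap.mul'_apply, hS]
    rw [key]
    simp [convUnit]
    exact Algebra.commutes _ _
  have h2 : conv k A M G = convUnit k A := by
    apply TensorProduct.ext'
    intro a b
    rw [conv_repr k A M G (tmulRepr k A (ℛ k a) (ℛ k b))]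
    simp only [tmulRepr, hM, hG, LinearMap.comp_apply, LinearEquiv.coe_coe,
      TensorProduct.comm_tmul, TensorProduct.map_tmul, LinearMap.mul'_apply]
    rw [Finset.sum_product]
    have inner : ∀ i ∈ (ℛ k a).index,
        ∑ j ∈ (ℛ k b).index, (ℛ k a).left i * (ℛ k b).left j *
          (S ((ℛ k b).right j) * S ((ℛ k a).right i))
        = Coalgebra.counit (R := k) b • ((ℛ k a).left i * S ((ℛ k a).right i)) := by
      intro i _
      have : ∀ j, (ℛ k a).left i * (ℛ k b).left j *
            (S ((ℛ k b).right j) * S ((ℛ k a).right i))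
          = (ℛ k a).left i * (((ℛ k b).left j * S ((ℛ k b).right j)) * S ((ℛ k a).right i)) := by
        intro j; rw [mul_assoc, ← mul_assoc ((ℛ k b).left j)]
      rw [Finset.sum_congr rfl fun j _ => this j, ← Finset.mul_sum, ← Finset.sum_mul,
        HopfAlgebra.sum_mul_antipode_eq_smul (ℛ k b)]
      rw [smul_mul_assoc, one_mul, mul_smul_comm]
    rw [Finset.sum_congr rfl inner, ← Finset.smul_sum,
      HopfAlgebra.sum_mul_antipode_eq_smul (ℛ k a)]
    rw [smul_smul]
    simp only [convUnit, LinearMap.comp_apply, Algebra.linearMap_apply,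
      TensorProduct.counit_tmul, TensorProduct.map_tmul, LinearMap.mul'_apply]
    rw [Algebra.smul_def, mul_one, mul_comm]
    rw [smul_eq_mul, mul_comm]
  have hFG : F = G := by
    calc F = conv k A F (convUnit k A) := (conv_convUnit k A F).symm
    _ = conv k A F (conv k A M G) := by rw [h2]
    _ = conv k A (conv k A F M) G := (conv_assoc k A F M G).symm
    _ = conv k A (convUnit k A) G := by rw [h1]
    _ = G := convUnit_conv k A G
  have := DFunLike.congr_fun hFG (a ⊗ₜ[k] b)
  simpa [hF, hG, hS, hM] using this

/-- The untwisting map `x ⊗ y ↦ Σ x₁ ⊗ y σ(x₂)`. -/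
def tw (σ : A →ₗ[k] A) : A ⊗[k] A →ₗ[k] A ⊗[k] A :=
  (LinearMap.mul' k A ∘ₗ (TensorProduct.comm k A A).toLinearMap ∘ₗ σ.rTensor A).lTensor A ∘ₗ
    (TensorProduct.assoc k A A A).toLinearMap ∘ₗ Coalgebra.comul.rTensor A

lemma tw_tmul (σ : A →ₗ[k] A) {ι : Type*} (x y : A) (r : Coalgebra.Repr k x ι) :
    tw k A σ (x ⊗ₜ[k] y) = ∑ i ∈ r.index, r.left i ⊗ₜ[k] (y * σ (r.right i)) := by
  simp only [tw, LinearMap.comp_apply, LinearMap.rTensor_tmul, ← r.eq]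
  rw [TensorProduct.sum_tmul, map_sum, map_sum]
  simp

lemma sum_tmul_counit_smul {ι : Type*} {x : A} (y : A) (r : Coalgebra.Repr k x ι) :
    ∑ i ∈ r.index, r.left i ⊗ₜ[k] (Coalgebra.counit (R := k) (r.right i) • y)
      = x ⊗ₜ[k] y := by
  have h := congrArg ((LinearMap.toSpanSingleton k A y).lTensor A)
    (Coalgebra.sum_tmul_counit_eq r)
  rw [map_sum] at h
  simp only [LinearMap.lTensor_tmul, LinearMap.toSpanSingleton_apply, one_smul] at h
  exact h

lemma tw_tw (σ ρ : A →ₗ[k] A)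
    (hcan : ∀ w : A, ∑ j ∈ (ℛ k w).index, ρ ((ℛ k w).right j) * σ ((ℛ k w).left j)
      = Coalgebra.counit (R := k) w • (1 : A)) :
    (tw k A σ) ∘ₗ (tw k A ρ) = LinearMap.id := by
  apply TensorProduct.ext'
  intro x y
  set g : A ⊗[k] A →ₗ[k] A := (LinearMap.mulLeft k y) ∘ₗ LinearMap.mul' k A ∘ₗ
    TensorProduct.map ρ σ ∘ₗ (TensorProduct.comm k A A).toLinearMap with hg
  have gapp : ∀ v w : A, g (v ⊗ₜ[k] w) = y * (ρ w * σ v) := by intro v w; simp [hg]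
  have key := congrArg (g.lTensor A)
    (Coalgebra.sum_tmul_tmul_eq (ℛ k x) (fun i => ℛ k ((ℛ k x).left i))
      (fun i => ℛ k ((ℛ k x).right i)))
  simp only [map_sum, LinearMap.lTensor_tmul, gapp] at key
  have hL : tw k A σ (tw k A ρ (x ⊗ₜ[k] y))
      = ∑ i ∈ (ℛ k x).index, ∑ j ∈ (ℛ k ((ℛ k x).left i)).index,
        (ℛ k ((ℛ k x).left i)).left j ⊗ₜ[k]
          (y * (ρ ((ℛ k x).right i) * σ ((ℛ k ((ℛ k x).left i)).right j))) := by
    rw [tw_tmul k A ρ x y (ℛ k x), map_sum]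
    refine Finset.sum_congr rfl fun i _ => ?_
    rw [tw_tmul k A σ _ _ (ℛ k ((ℛ k x).left i))]
    exact Finset.sum_congr rfl fun j _ => by rw [mul_assoc]
  rw [LinearMap.comp_apply, hL, key, LinearMap.id_apply]
  have inner : ∀ i ∈ (ℛ k x).index,
      ∑ j ∈ (ℛ k ((ℛ k x).right i)).index, (ℛ k x).left i ⊗ₜ[k]
        (y * (ρ ((ℛ k ((ℛ k x).right i)).right j) * σ ((ℛ k ((ℛ k x).right i)).left j)))
      = (ℛ k x).left i ⊗ₜ[k] (Coalgebra.counit (R := k) ((ℛ k x).right i) • y) := by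
    intro i _
    rw [← TensorProduct.tmul_sum, ← Finset.mul_sum, hcan ((ℛ k x).right i)]
    rw [mul_smul_comm, mul_one]
  rw [Finset.sum_congr rfl inner, sum_tmul_counit_smul]

lemma tw_cancel₁ :
    (tw k A (HopfAlgebra.antipode (R := k))) ∘ₗ
      (tw k A ((HopfAlgebra.antipode (R := k)) ∘ₗ (HopfAlgebra.antipode (R := k))))
      = LinearMap.id := by
  apply tw_tw
  intro w
  have : ∀ j ∈ (ℛ k w).index,
      (HopfAlgebra.antipode (R := k) ∘ₗ HopfAlgebra.antipode (R := k)) ((ℛ k w).right j) *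
        HopfAlgebra.antipode (R := k) ((ℛ k w).left j)
      = HopfAlgebra.antipode (R := k)
          ((ℛ k w).left j * HopfAlgebra.antipode (R := k) ((ℛ k w).right j)) := by
    intro j _
    rw [antipode_mul']
    simp
  rw [Finset.sum_congr rfl this, ← map_sum, HopfAlgebra.sum_mul_antipode_eq_smul (ℛ k w),
    map_smul, antipode_one']

lemma tw_cancel₂ :
    (tw k A ((HopfAlgebra.antipode (R := k)) ∘ₗ (HopfAlgebra.antipode (R := k)))) ∘ₗ
      (tw k A (HopfAlgebra.antipode (R := k)))
      = LinearMap.id := by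
  apply tw_tw
  intro w
  have : ∀ j ∈ (ℛ k w).index,
      HopfAlgebra.antipode (R := k) ((ℛ k w).right j) *
        (HopfAlgebra.antipode (R := k) ∘ₗ HopfAlgebra.antipode (R := k)) ((ℛ k w).left j)
      = HopfAlgebra.antipode (R := k)
          (HopfAlgebra.antipode (R := k) ((ℛ k w).left j) * (ℛ k w).right j) := by
    intro j _
    rw [antipode_mul']
    simp
  rw [Finset.sum_congr rfl this, ← map_sum, HopfAlgebra.sum_antipode_mul_eq_smul (ℛ k w),
    map_smul, antipode_one']

lemma adAct_tmul {ι : Type*} (a u v : A) (ra : Coalgebra.Repr k a ι) :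
    adAct k A a (u ⊗ₜ[k] v) = ∑ i ∈ ra.index,
      (ra.left i * u) ⊗ₜ[k] (v * HopfAlgebra.antipode (R := k) (ra.right i)) := by
  simp only [adAct, LinearMap.comp_apply, ← ra.eq, map_sum, TensorProduct.map_tmul]
  rw [LinearMap.sum_apply]
  simp [TensorProduct.homTensorHomMap_apply, LinearMap.mul_apply']

lemma adAct_tw (a : A) (z : A ⊗[k] A) :
    adAct k A a (tw k A (HopfAlgebra.antipode (R := k)) z)
      = tw k A (HopfAlgebra.antipode (R := k))
          (TensorProduct.map (LinearMap.mulLeft k a) LinearMap.id z) := by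
  induction z using TensorProduct.induction_on with
  | zero => simp
  | add u v hu hv => simp [map_add, hu, hv]
  | tmul x y =>
    rw [TensorProduct.map_tmul, LinearMap.mulLeft_apply, LinearMap.id_apply,
      tw_tmul k A _ _ y (mulRepr k A (ℛ k a) (ℛ k x)),
      tw_tmul k A _ x y (ℛ k x), map_sum]
    simp only [mulRepr]
    rw [Finset.sum_product]
    rw [Finset.sum_congr rfl (fun i (_ : i ∈ (ℛ k a).index) =>
      Finset.sum_congr rfl (fun j _ => by
        rw [antipode_mul', ← mul_assoc]))]
    rw [Finset.sum_comm]
    refine Finset.sum_congr rfl fun j _ => ?_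
    rw [adAct_tmul k A a _ _ (ℛ k a)]

/-- `L(A^e)` is a free left `A`-module. -/
theorem adjoint_Ae_free :
    ∃ (ι : Type) (e : (ι →₀ A) ≃ₗ[k] (A ⊗[k] A)),
      ∀ (a : A) (f : ι →₀ A), e (a • f) = adAct k A a (e f) := by
  classical
  set b : Module.Basis (Module.Basis.ofVectorSpaceIndex k A) k A := Module.Basis.ofVectorSpace k A with hb
  set fin : ((Module.Basis.ofVectorSpaceIndex k A) →₀ A) ≃ₗ[k] A ⊗[k] A :=
    (TensorProduct.finsuppScalarRight k k A (Module.Basis.ofVectorSpaceIndex k A)).symm ≪≫ₗ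
      TensorProduct.congr (LinearEquiv.refl k A) b.repr.symm with hfin
  set ψe : (A ⊗[k] A) ≃ₗ[k] (A ⊗[k] A) :=
    LinearEquiv.ofLinear (tw k A (HopfAlgebra.antipode (R := k)))
      (tw k A ((HopfAlgebra.antipode (R := k)) ∘ₗ (HopfAlgebra.antipode (R := k))))
      (tw_cancel₁ k A) (tw_cancel₂ k A) with hψe
  refine ⟨Module.Basis.ofVectorSpaceIndex k A, fin ≪≫ₗ ψe, ?_⟩
  intro a f
  have hsm : fin (a • f) = TensorProduct.map (LinearMap.mulLeft k a) LinearMap.id (fin f) := by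
    induction f using Finsupp.induction_linear with
    | zero => simp
    | add u v hu hv => simp only [smul_add, map_add, hu, hv]
    | single i c =>
      rw [Finsupp.smul_single, smul_eq_mul]
      simp only [hfin, LinearEquiv.trans_apply,
        TensorProduct.finsuppScalarRight_symm_apply_single, TensorProduct.congr_tmul,
        LinearEquiv.refl_apply, TensorProduct.map_tmul, LinearMap.mulLeft_apply,
        LinearMap.id_apply]
  simp only [LinearEquiv.trans_apply, hsm]
  rw [hψe]
  simp only [LinearEquiv.ofLinear_apply]
  exact (adAct_tw k A a (fin f)).symm

end
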